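/- arXiv:2011.08015 — 9 statements merged into one kernel-verified Lean document; each statement's English description precedes it below -/
import Mathlib

section
/- For any integers a, b and positive integer n with a ≥ b and a + b ≥ n - 1, the generalized binomial coefficients satisfy C(a+1, n) + C(b-1, n) ≥ C(a, n) + C(b, n), where C(x, n) = x(x-1)⋯(x-n+1)/n! is the generalized binomial coefficient defined for any integer x. -/
open Finset

/-- Generalized binomial coefficient `C(a, k) = a(a-1)⋯(a-k+1)/k!`. -/
def gbc (a : ℚ) (k : ℕ) : ℚ :=
  (∏ i ∈ Finset.range k, (a - i)) / (Nat.factorial k)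

lemma prod_eq_descPoch (a : ℚ) (k : ℕ) :
    (∏ i ∈ Finset.range k, (a - i)) = (descPochhammer ℚ k).eval a := by
  induction k with
  | zero => simp
  | succ k ih => rw [Finset.prod_range_succ, ih, descPochhammer_succ_eval]

lemma gbc_nat (m k : ℕ) : gbc (m : ℚ) k = (Nat.choose m k : ℚ) := by
  rw [gbc, prod_eq_descPoch, descPochhammer_eval_eq_descFactorial,
    Nat.descFactorial_eq_factorial_mul_choose]
  push_cast
  rw [mul_comm, mul_div_assoc, div_self (by exact_mod_cast (Nat.factorial_pos k).ne'), mul_one]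

lemma gbc_neg (y : ℚ) (k : ℕ) : gbc y k = (-1) ^ k * gbc ((k : ℚ) - 1 - y) k := by
  rw [gbc, gbc, ← mul_div_assoc]
  congr 1
  have h1 : (∏ i ∈ Finset.range k, (y - (i : ℚ))) =
      (-1) ^ k * ∏ i ∈ Finset.range k, ((i : ℚ) - y) := by
    have he : ∀ i ∈ Finset.range k, (y - (i : ℚ)) = (-1) * ((i : ℚ) - y) := by
      intro i _
      ring
    rw [Finset.prod_congr rfl he, Finset.prod_mul_distrib, Finset.prod_const, Finset.card_range]
  rw [h1]
  congr 1
  rw [← Finset.prod_range_reflect (fun i => ((k : ℚ) - 1 - y - i)) k]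
  apply Finset.prod_congr rfl
  intro j hj
  simp only [Finset.mem_range] at hj
  have hc : (↑(k - 1 - j) : ℚ) = (k : ℚ) - 1 - j := by
    have h1 : 1 + j ≤ k := by omega
    rw [Nat.sub_sub, Nat.cast_sub h1]
    push_cast
    ring
  rw [hc]
  ring

lemma gbc_succ (a : ℚ) (n : ℕ) : gbc (a + 1) (n + 1) = gbc a (n + 1) + gbc a n := by
  rw [gbc, gbc, gbc]
  have h1 : (∏ i ∈ Finset.range (n + 1), (a + 1 - i)) =
      (a + 1) * ∏ i ∈ Finset.range n, (a - i) := by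
    rw [Finset.prod_range_succ']
    have he : ∀ i ∈ Finset.range n, (a + 1 - (↑(i + 1) : ℚ)) = a - i := by
      intro i _
      push_cast
      ring
    rw [Finset.prod_congr rfl he]
    push_cast
    ring
  have h2 : (∏ i ∈ Finset.range (n + 1), (a - i)) =
      (∏ i ∈ Finset.range n, (a - i)) * (a - n) := Finset.prod_range_succ _ _
  rw [h1, h2, Nat.factorial_succ]
  push_cast
  field_simp
  ring

lemma gbc_nonneg (x : ℤ) (k : ℕ) (hx : 0 ≤ x) : 0 ≤ gbc (x : ℚ) k := by
  obtain ⟨m, rfl⟩ := Int.eq_ofNat_of_zero_le hx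
  rw [Int.cast_natCast, gbc_nat]
  positivity

lemma gbc_mono (x y : ℤ) (k : ℕ) (hyx : y ≤ x) (hs : (k : ℤ) - 1 ≤ x + y) :
    gbc (y : ℚ) k ≤ gbc (x : ℚ) k := by
  have hx0 : 0 ≤ x := by omega
  obtain ⟨M, rfl⟩ := Int.eq_ofNat_of_zero_le hx0
  rcases le_or_gt 0 y with hy0 | hy0
  · obtain ⟨m, rfl⟩ := Int.eq_ofNat_of_zero_le hy0
    rw [Int.cast_natCast, Int.cast_natCast, gbc_nat, gbc_nat]
    exact_mod_cast Nat.choose_le_choose k (by exact_mod_cast hyx)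
  · have hky : 0 ≤ (k : ℤ) - 1 - y := by omega
    obtain ⟨m, hm⟩ := Int.eq_ofNat_of_zero_le hky
    have hyc : (y : ℚ) = (k : ℚ) - 1 - m := by
      have h2 : (((k : ℤ) - 1 - y : ℤ) : ℚ) = ((m : ℕ) : ℚ) := by exact_mod_cast congrArg (fun z : ℤ => (z : ℚ)) hm
      push_cast at h2
      linarith
    have harg : (k : ℚ) - 1 - (y : ℚ) = (m : ℚ) := by rw [hyc]; ring
    have hneg : gbc (y : ℚ) k = (-1) ^ k * gbc (m : ℚ) k := by
      rw [gbc_neg (y : ℚ) k, harg]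
    rcases Nat.even_or_odd k with he | ho
    · rw [hneg, he.neg_one_pow, one_mul, gbc_nat, Int.cast_natCast, gbc_nat]
      have hmM : m ≤ M := by omega
      exact_mod_cast Nat.choose_le_choose k hmM
    · rw [hneg, ho.neg_one_pow, neg_one_mul]
      have h1 : 0 ≤ gbc (m : ℚ) k := by rw [gbc_nat]; positivity
      have h2 : 0 ≤ gbc ((M : ℤ) : ℚ) k := gbc_nonneg _ _ (by positivity)
      linarith

theorem gbc_ineq (a b : ℤ) (n : ℕ) (hn : 0 < n) (hba : b ≤ a) (hsum : (n : ℤ) - 1 ≤ a + b) :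
    gbc (a : ℚ) n + gbc (b : ℚ) n ≤ gbc ((a : ℚ) + 1) n + gbc ((b : ℚ) - 1) n := by
  obtain ⟨k, rfl⟩ := Nat.exists_eq_add_of_lt hn
  simp only [Nat.zero_add] at *
  have ha : gbc ((a : ℚ) + 1) (k + 1) = gbc (a : ℚ) (k + 1) + gbc (a : ℚ) k :=
    gbc_succ (a : ℚ) k
  have hb : gbc ((b : ℚ) - 1 + 1) (k + 1) = gbc ((b : ℚ) - 1) (k + 1) + gbc ((b : ℚ) - 1) k :=
    gbc_succ ((b : ℚ) - 1) k
  rw [sub_add_cancel] at hb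
  have hb1 : ((b : ℚ) - 1) = ((b - 1 : ℤ) : ℚ) := by push_cast; ring
  have key : gbc ((b - 1 : ℤ) : ℚ) k ≤ gbc (a : ℚ) k := by
    apply gbc_mono a (b - 1) k (by omega) (by push_cast at hsum ⊢; omega)
  rw [ha, hb, hb1]
  linarith
end

section
/- For any integers a, b and positive odd integer n with a ≥ b and a + b = n - 1, the generalized binomial coefficients satisfy C(a+1, n) + C(b-1, n) = C(a, n) + C(b, n). -/
open Finset

lemma gbc_add_eq_zero (x y : ℚ) (n : ℕ) (hodd : Odd n) (h : x + y = (n : ℚ) - 1) :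
    gbc x n + gbc y n = 0 := by
  have hn : 1 ≤ n := by
    rcases hodd with ⟨k, hk⟩; omega
  have hprod : ∏ i ∈ Finset.range n, (y - i) = -∏ i ∈ Finset.range n, (x - i) := by
    rw [← Finset.prod_range_reflect (fun i => (y - i : ℚ)) n]
    have heq : ∀ i ∈ Finset.range n, (y - ((n - 1 - i : ℕ) : ℚ)) = -(x - i) := by
      intro i hi
      have hi' := Finset.mem_range.mp hi
      have : ((n - 1 - i : ℕ) : ℚ) = (n : ℚ) - 1 - i := by
        push_cast [Nat.cast_sub (by omega : 1 + i ≤ n)]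
        have : n - 1 - i = n - (1 + i) := by omega
        rw [this]
        push_cast [Nat.cast_sub (by omega : 1 + i ≤ n)]
        ring
      rw [this]
      have hx : x = (n : ℚ) - 1 - y := by linarith
      rw [hx]; ring
    rw [Finset.prod_congr rfl heq]
    have : ∀ i ∈ Finset.range n, -(x - (i:ℚ)) = (-1) * (x - i) := by intro i _; ring
    rw [Finset.prod_congr rfl this, Finset.prod_mul_distrib, Finset.prod_const,
      Finset.card_range, Odd.neg_one_pow hodd]
    ring
  unfold gbc
  rw [hprod]
  ring

theorem gbc_eq_of_odd (a b : ℤ) (n : ℕ) (hn : 0 < n) (hodd : Odd n) (hba : b ≤ a)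
    (hsum : a + b = (n : ℤ) - 1) :
    gbc ((a : ℚ) + 1) n + gbc ((b : ℚ) - 1) n = gbc (a : ℚ) n + gbc (b : ℚ) n := by
  have h1 : gbc ((a : ℚ) + 1) n + gbc ((b : ℚ) - 1) n = 0 := by
    apply gbc_add_eq_zero _ _ _ hodd
    have h : ((a:ℚ)) + (b:ℚ) = (n:ℚ) - 1 := by exact_mod_cast hsum
    linarith
  have h2 : gbc (a : ℚ) n + gbc (b : ℚ) n = 0 := by
    apply gbc_add_eq_zero _ _ _ hodd
    have h : ((a:ℚ)) + (b:ℚ) = (n:ℚ) - 1 := by exact_mod_cast hsum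
    linarith
  rw [h1, h2]
end

section
/- Let Td(n; d_1,…,d_r) := Σ_{j=0}^{r} (-1)^{n+r+j} Σ_{1 ≤ k_1 < ⋯ < k_j ≤ r} C(-1 + d_{k_1} + ⋯ + d_{k_j}, n+r). If c_1 := n + r + 1 - Σ_{i=1}^{r} d_i > 0 and all d_i > 1, then Td(n; d_1,…,d_r) = 1. -/
open Finset

/-- Todd genus of the complete intersection `X_n(d₁,…,d_r)` via the combinatorial formula. -/
def Td (n r : ℕ) (d : Fin r → ℤ) : ℚ :=
  ∑ S ∈ (Finset.univ : Finset (Fin r)).powerset,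
    (-1) ^ (n + r + S.card) * gbc (-1 + ∑ i ∈ S, (d i : ℚ)) (n + r)

lemma gbc_neg_one (m : ℕ) : gbc (-1) m = (-1) ^ m := by
  have hp : ∀ m : ℕ, ∏ i ∈ Finset.range m, ((-1 : ℚ) - i) = (-1) ^ m * (Nat.factorial m) := by
    intro m
    induction m with
    | zero => simp
    | succ k ih =>
        rw [Finset.prod_range_succ, ih, Nat.factorial_succ]
        push_cast
        ring
  unfold gbc
  rw [hp]
  have : (Nat.factorial m : ℚ) ≠ 0 := by positivity
  field_simp

lemma gbc_nat_lt (N m : ℕ) (h : N < m) : gbc (N : ℚ) m = 0 := by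
  unfold gbc
  rw [Finset.prod_eq_zero (Finset.mem_range.2 h) (by simp)]
  simp

lemma gbc_succ_s4 (x : ℚ) (m : ℕ) : gbc (x + 1) (m + 1) = gbc x (m + 1) + gbc x m := by
  unfold gbc
  have h1 : ∏ i ∈ Finset.range (m + 1), (x + 1 - i) = (∏ i ∈ Finset.range m, (x - i)) * (x + 1) := by
    rw [Finset.prod_range_succ']
    congr 1
    · apply Finset.prod_congr rfl
      intro i _
      push_cast
      ring
    · simp
  have h2 : ∏ i ∈ Finset.range (m + 1), (x - i) = (∏ i ∈ Finset.range m, (x - i)) * (x - m) := by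
    rw [Finset.prod_range_succ]
  rw [h1, h2, Nat.factorial_succ]
  have hm : (Nat.factorial m : ℚ) ≠ 0 := by positivity
  have hm1 : ((m : ℚ) + 1) ≠ 0 := by positivity
  push_cast
  field_simp
  ring

lemma gbc_add_nat (x : ℚ) (m h : ℕ) :
    gbc (x + h) (m + 1) = gbc x (m + 1) + ∑ j ∈ Finset.range h, gbc (x + j) m := by
  induction h with
  | zero => simp
  | succ k ih =>
      have : x + (k + 1 : ℕ) = (x + k) + 1 := by push_cast; ring
      rw [this, gbc_succ_s4, ih, Finset.sum_range_succ]
      push_cast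
      ring

lemma key {ι : Type*} [DecidableEq ι] (s : Finset ι) :
    ∀ (m : ℕ) (d : ι → ℤ), (∀ i ∈ s, 1 ≤ d i) → (∑ i ∈ s, d i) ≤ (m : ℤ) →
    ∑ S ∈ s.powerset, (-1 : ℚ) ^ S.card * gbc (-1 + ∑ i ∈ S, (d i : ℚ)) m = (-1) ^ m := by
  induction s using Finset.induction_on with
  | empty =>
      intro m d _ _
      simp [gbc_neg_one]
  | @insert a s ha ih =>
      intro m d hd hsum
      have hda : 1 ≤ d a := hd a (Finset.mem_insert_self a s)
      have hds : ∀ i ∈ s, 1 ≤ d i := fun i hi => hd i (Finset.mem_insert_of_mem hi)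
      have hsum_insert : ∑ i ∈ insert a s, d i = d a + ∑ i ∈ s, d i := Finset.sum_insert ha
      have hs_nonneg : ∀ t : Finset ι, t ⊆ s → 0 ≤ ∑ i ∈ t, d i := by
        intro t ht
        apply Finset.sum_nonneg
        intro i hi
        exact le_trans zero_le_one (hds i (ht hi))
      have hm1 : 1 ≤ m := by
        have h0 : 0 ≤ ∑ i ∈ s, d i := hs_nonneg s (le_refl s)
        have : (1 : ℤ) ≤ (m : ℤ) := by omega
        exact_mod_cast this
      obtain ⟨k, rfl⟩ : ∃ k, m = k + 1 := ⟨m - 1, by omega⟩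
      obtain ⟨h', hh'⟩ : ∃ h', (d a).toNat = h' + 1 := ⟨(d a).toNat - 1, by omega⟩
      have hda_cast : (d a : ℚ) = ((h' + 1 : ℕ) : ℚ) := by
        rw [← hh']; exact_mod_cast (Int.toNat_of_nonneg (by omega)).symm
      rw [Finset.sum_powerset_insert ha]
      have hstep : ∀ t ∈ s.powerset,
          (-1 : ℚ) ^ (insert a t).card * gbc (-1 + ∑ i ∈ insert a t, (d i : ℚ)) (k + 1) =
          -((-1 : ℚ) ^ t.card * gbc (-1 + ∑ i ∈ t, (d i : ℚ)) (k + 1))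
          - (-1 : ℚ) ^ t.card * ∑ j ∈ Finset.range (h' + 1),
              gbc ((-1 + ∑ i ∈ t, (d i : ℚ)) + j) k := by
        intro t ht
        have hts : t ⊆ s := Finset.mem_powerset.1 ht
        have hat : a ∉ t := fun h => ha (hts h)
        rw [Finset.card_insert_of_notMem hat, Finset.sum_insert hat]
        have harg : -1 + ((d a : ℚ) + ∑ i ∈ t, (d i : ℚ)) =
            (-1 + ∑ i ∈ t, (d i : ℚ)) + ((h' + 1 : ℕ) : ℚ) := by
          rw [hda_cast]; ring
        rw [harg, gbc_add_nat, pow_succ]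
        ring
      rw [Finset.sum_congr rfl hstep]
      have hzero : ∀ t ∈ s.powerset, ∀ j ∈ Finset.range h',
          gbc ((-1 + ∑ i ∈ t, (d i : ℚ)) + ((j + 1 : ℕ) : ℚ)) k = 0 := by
        intro t ht j hj
        have hts : t ⊆ s := Finset.mem_powerset.1 ht
        have h0 : 0 ≤ ∑ i ∈ t, d i := hs_nonneg t hts
        have hle : ∑ i ∈ t, d i ≤ ∑ i ∈ s, d i := by
          apply Finset.sum_le_sum_of_subset_of_nonneg hts
          intro i hi _
          exact le_trans zero_le_one (hds i hi)
        have hjlt : j < h' := Finset.mem_range.1 hj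
        have hlt : (∑ i ∈ t, d i).toNat + j < k := by
          have hb : ∑ i ∈ s, d i ≤ (k : ℤ) + 1 - d a := by omega
          have hda' : d a = (h' : ℤ) + 1 := by omega
          omega
        have hcast : (-1 + ∑ i ∈ t, (d i : ℚ)) + ((j + 1 : ℕ) : ℚ)
            = (((∑ i ∈ t, d i).toNat + j : ℕ) : ℚ) := by
          have : ((∑ i ∈ t, d i : ℤ) : ℚ) = (((∑ i ∈ t, d i).toNat : ℕ) : ℚ) := by
            exact_mod_cast (Int.toNat_of_nonneg h0).symm
          push_cast [← this]
          ring
        rw [hcast]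
        exact gbc_nat_lt _ _ hlt
      have hsplit : ∀ t ∈ s.powerset,
          ∑ j ∈ Finset.range (h' + 1), gbc ((-1 + ∑ i ∈ t, (d i : ℚ)) + j) k
          = gbc (-1 + ∑ i ∈ t, (d i : ℚ)) k := by
        intro t ht
        rw [Finset.sum_range_succ']
        rw [Finset.sum_congr rfl (hzero t ht)]
        simp
      have hIH : ∑ S ∈ s.powerset, (-1 : ℚ) ^ S.card * gbc (-1 + ∑ i ∈ S, (d i : ℚ)) k
          = (-1) ^ k := by
        apply ih k d hds
        omega
      calc ∑ S ∈ s.powerset, (-1 : ℚ) ^ S.card * gbc (-1 + ∑ i ∈ S, (d i : ℚ)) (k + 1)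
            + ∑ t ∈ s.powerset,
              (-((-1 : ℚ) ^ t.card * gbc (-1 + ∑ i ∈ t, (d i : ℚ)) (k + 1))
               - (-1 : ℚ) ^ t.card * ∑ j ∈ Finset.range (h' + 1),
                   gbc ((-1 + ∑ i ∈ t, (d i : ℚ)) + j) k)
          = - ∑ t ∈ s.powerset, (-1 : ℚ) ^ t.card *
              ∑ j ∈ Finset.range (h' + 1), gbc ((-1 + ∑ i ∈ t, (d i : ℚ)) + j) k := by
            rw [Finset.sum_sub_distrib, Finset.sum_neg_distrib]
            ring
        _ = - ∑ t ∈ s.powerset, (-1 : ℚ) ^ t.card * gbc (-1 + ∑ i ∈ t, (d i : ℚ)) k := by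
            congr 1
            apply Finset.sum_congr rfl
            intro t ht
            rw [hsplit t ht]
        _ = (-1) ^ (k + 1) := by rw [hIH]; ring

theorem todd_pos_c1 (n r : ℕ) (hr : 1 ≤ r) (d : Fin r → ℤ) (hd : ∀ i, 1 < d i)
    (hc : 0 < (n : ℤ) + r + 1 - ∑ i, d i) :
    Td n r d = 1 := by
  have h1 : ∀ i ∈ (Finset.univ : Finset (Fin r)), 1 ≤ d i := fun i _ => le_of_lt (hd i)
  have h2 : (∑ i, d i) ≤ ((n + r : ℕ) : ℤ) := by push_cast; omega
  have hk := key (Finset.univ : Finset (Fin r)) (n + r) d h1 h2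
  unfold Td
  have : ∀ S ∈ (Finset.univ : Finset (Fin r)).powerset,
      (-1 : ℚ) ^ (n + r + S.card) * gbc (-1 + ∑ i ∈ S, (d i : ℚ)) (n + r)
      = (-1 : ℚ) ^ (n + r) * ((-1 : ℚ) ^ S.card * gbc (-1 + ∑ i ∈ S, (d i : ℚ)) (n + r)) := by
    intro S _
    rw [pow_add]
    ring
  rw [Finset.sum_congr rfl this, ← Finset.mul_sum, hk, ← pow_add]
  exact Even.neg_one_pow ⟨n + r, by ring⟩
end

section
/- Let Td(n; d_1,…,d_r) := Σ_{j=0}^{r} (-1)^{n+r+j} Σ_{1 ≤ k_1 < ⋯ < k_j ≤ r} C(-1 + d_{k_1} + ⋯ + d_{k_j}, n+r). If c_1 := n + r + 1 - Σ_{i=1}^{r} d_i = 0 and all d_i > 1, then Td(n; d_1,…,d_r) = 1 + (-1)^n. -/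
open Finset

open Polynomial

lemma neg_one_pow_mod (a b : ℕ) (h : a % 2 = b % 2) : ((-1:ℚ))^a = (-1)^b := by
  conv_lhs => rw [← Nat.div_add_mod a 2]
  conv_rhs => rw [← Nat.div_add_mod b 2]
  rw [h]
  simp [pow_add, pow_mul]

lemma gbc_pascal (a : ℚ) (m : ℕ) : gbc a (m+1) + gbc a m = gbc (a+1) (m+1) := by
  have h2 : ∏ i ∈ range (m+1), (a + 1 - i) = (a+1) * ∏ i ∈ range m, (a - i) := by
    rw [Finset.prod_range_succ']
    have : ∀ i ∈ range m, (a + 1 - (((i+1:ℕ)):ℚ)) = a - i := by intro i _; push_cast; ring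
    rw [Finset.prod_congr rfl this]
    push_cast; ring
  have hm : ((Nat.factorial (m+1) : ℚ)) = (m+1) * Nat.factorial m := by
    rw [Nat.factorial_succ]; push_cast; ring
  have hfac : (Nat.factorial m : ℚ) ≠ 0 := by exact_mod_cast Nat.factorial_ne_zero m
  have hm1 : ((m:ℚ)+1) ≠ 0 := by positivity
  unfold gbc
  rw [h2, Finset.prod_range_succ, hm]
  field_simp
  ring

lemma gbc_nat_s5 (N k : ℕ) : gbc (N:ℚ) k = N.choose k := by
  have key : ∏ i ∈ range k, ((N:ℚ) - i) = (N.descFactorial k : ℚ) := by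
    induction k with
    | zero => simp
    | succ k ih =>
      rw [Finset.prod_range_succ, ih, Nat.descFactorial_succ]
      rcases lt_trichotomy k N with h | h | h
      · rw [Nat.cast_mul, Nat.cast_sub h.le]; ring
      · subst h; simp
      · rw [Nat.descFactorial_eq_zero_iff_lt.2 h, Nat.cast_zero, zero_mul]; simp
  unfold gbc
  rw [key, Nat.descFactorial_eq_factorial_mul_choose, Nat.cast_mul,
    mul_div_cancel_left₀ _ (by exact_mod_cast Nat.factorial_ne_zero k)]

lemma gbc_alt (N m : ℕ) : gbc ((N:ℚ) - 1) m
    = ∑ k ∈ range (m+1), (-1:ℚ)^(m-k) * N.choose k := by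
  induction m with
  | zero => simp [gbc]
  | succ m ih =>
    have pas := gbc_pascal ((N:ℚ)-1) m
    rw [sub_add_cancel] at pas
    have h1 : gbc ((N:ℚ)-1) (m+1) = gbc (N:ℚ) (m+1) - gbc ((N:ℚ)-1) m := by linarith
    rw [h1, ih, gbc_nat_s5]
    conv_rhs => rw [Finset.sum_range_succ]
    rw [Nat.sub_self, pow_zero, one_mul]
    have h2 : ∀ k ∈ range (m+1), (-1:ℚ)^(m+1-k) * N.choose k
        = -((-1:ℚ)^(m-k) * N.choose k) := by
      intro k hk
      rw [Finset.mem_range] at hk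
      rw [show m + 1 - k = (m - k) + 1 by omega, pow_succ]
      ring
    rw [Finset.sum_congr rfl h2, Finset.sum_neg_distrib]
    ring

noncomputable def gq (e : ℕ) : ℚ[X] := ∑ j ∈ Finset.range e, (X+1)^j

lemma gq_spec (e : ℕ) : (gq e).degree < e ∧ (gq e).natDegree = e - 1 ∧
    (1 ≤ e → (gq e).Monic) := by
  induction e with
  | zero =>
    refine ⟨?_, by simp [gq], by omega⟩
    simp [gq]
  | succ e ih =>
    have hq : gq (e+1) = gq e + (X+1)^e := by rw [gq, gq, Finset.sum_range_succ]
    have hx : ((X:ℚ[X])+1) = X + C 1 := by rw [C_1]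
    have hmon : ((X:ℚ[X])+1)^e |>.Monic := by rw [hx]; exact (monic_X_add_C 1).pow e
    have hdeg : (((X:ℚ[X])+1)^e).degree = (e : WithBot ℕ) := by
      rw [degree_pow, hx, degree_X_add_C, nsmul_eq_mul, mul_one]
    have hlt : (gq e).degree < (((X:ℚ[X])+1)^e).degree := by rw [hdeg]; exact ih.1
    have hdeg2 : (gq (e+1)).degree = (e : WithBot ℕ) := by
      rw [hq, degree_add_eq_right_of_degree_lt hlt, hdeg]
    refine ⟨?_, ?_, fun _ => ?_⟩
    · rw [hdeg2]; exact_mod_cast WithBot.coe_lt_coe.2 (Nat.lt_succ_self e)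
    · simp [natDegree_eq_of_degree_eq_some hdeg2]
    · rw [hq]; rw [add_comm]; exact hmon.add_of_left hlt

theorem todd_zero_c1 (n r : ℕ) (hr : 1 ≤ r) (d : Fin r → ℤ) (hd : ∀ i, 1 < d i)
    (hc : (n : ℤ) + r + 1 - ∑ i, d i = 0) :
    Td n r d = 1 + (-1) ^ n := by
  set m := n + r with hm
  set e : Fin r → ℕ := fun i => (d i).toNat with he
  have hde : ∀ i, (e i : ℤ) = d i := fun i => Int.toNat_of_nonneg (by linarith [hd i])
  have he2 : ∀ i, 2 ≤ e i := by
    intro i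
    have h1 : (2:ℤ) ≤ (e i : ℤ) := by rw [hde]; linarith [hd i]
    exact_mod_cast h1
  have hsum : ∑ i, e i = n + r + 1 := by
    have h1 : ((∑ i, e i : ℕ) : ℤ) = ∑ i, d i := by
      push_cast
      exact Finset.sum_congr rfl fun i _ => hde i
    omega
  set A : ℚ[X] := ∏ i, ((1:ℚ[X]) - (X+1)^(e i)) with hA
  set P : ℚ[X] := ∏ i, gq (e i) with hP
  -- coefficients of A as signed sum over subsets
  have hA_coeff : ∀ k, A.coeff k
      = ∑ S ∈ (Finset.univ : Finset (Fin r)).powerset,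
          (-1:ℚ)^S.card * ((∑ i ∈ S, e i).choose k) := by
    have expand : A = ∑ S ∈ (Finset.univ : Finset (Fin r)).powerset,
        (-1:ℚ[X])^S.card * (X+1)^(∑ i ∈ S, e i) := by
      rw [hA]
      have h1 : ∀ i ∈ (Finset.univ : Finset (Fin r)),
          (1:ℚ[X]) - (X+1)^(e i) = (-(X+1)^(e i)) + 1 := by intro i _; ring
      rw [Finset.prod_congr rfl h1, Finset.prod_add]
      apply Finset.sum_congr rfl
      intro S _
      rw [Finset.prod_const_one, mul_one]
      have h2 : ∀ i ∈ S, (-(X+1)^(e i) : ℚ[X]) = (-1) * (X+1)^(e i) := by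
        intro i _; ring
      rw [Finset.prod_congr rfl h2, Finset.prod_mul_distrib, Finset.prod_const,
        Finset.prod_pow_eq_pow_sum]
    intro k
    rw [expand, Polynomial.finset_sum_coeff]
    apply Finset.sum_congr rfl
    intro S _
    rw [show ((-1:ℚ[X])^S.card) = C ((-1:ℚ)^S.card) by simp, Polynomial.coeff_C_mul,
      Polynomial.coeff_X_add_one_pow]
  -- Step 1 : Td as alternating sum of coefficients of A
  have key1 : Td n r d = ∑ k ∈ range (m+1), (-1:ℚ)^k * A.coeff k := by
    have hcast : ∀ S : Finset (Fin r),
        (-1 : ℚ) + ∑ i ∈ S, (d i : ℚ) = ((∑ i ∈ S, e i : ℕ):ℚ) - 1 := by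
      intro S
      have : ∑ i ∈ S, (d i : ℚ) = ((∑ i ∈ S, e i : ℕ):ℚ) := by
        push_cast
        refine (Finset.sum_congr rfl fun i _ => ?_).symm
        rw [← hde]; push_cast; ring
      rw [this]; ring
    calc Td n r d
        = ∑ S ∈ (Finset.univ : Finset (Fin r)).powerset, ∑ k ∈ range (m+1),
            (-1:ℚ)^(m+S.card) * ((-1:ℚ)^(m-k) * ((∑ i ∈ S, e i).choose k)) := by
          unfold Td
          apply Finset.sum_congr rfl
          intro S _
          rw [hcast S, gbc_alt, Finset.mul_sum]
      _ = ∑ k ∈ range (m+1), ∑ S ∈ (Finset.univ : Finset (Fin r)).powerset,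
            (-1:ℚ)^(m+S.card) * ((-1:ℚ)^(m-k) * ((∑ i ∈ S, e i).choose k)) :=
          Finset.sum_comm
      _ = ∑ k ∈ range (m+1), (-1:ℚ)^k * A.coeff k := by
          apply Finset.sum_congr rfl
          intro k hk
          rw [Finset.mem_range] at hk
          rw [hA_coeff, Finset.mul_sum]
          apply Finset.sum_congr rfl
          intro S _
          have hs : (-1:ℚ)^(m+S.card) * (-1)^(m-k) = (-1)^k * (-1)^S.card := by
            rw [← pow_add, ← pow_add]
            exact neg_one_pow_mod _ _ (by omega)
          calc (-1:ℚ)^(m+S.card) * ((-1:ℚ)^(m-k) * ((∑ i ∈ S, e i).choose k))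
              = ((-1:ℚ)^(m+S.card) * (-1)^(m-k)) * ((∑ i ∈ S, e i).choose k) := by ring
            _ = ((-1:ℚ)^k * (-1)^S.card) * ((∑ i ∈ S, e i).choose k) := by rw [hs]
            _ = (-1:ℚ)^k * ((-1:ℚ)^S.card * ((∑ i ∈ S, e i).choose k)) := by ring
  -- Step 2 : A = (-1)^r * (P * X^r)
  have key2 : A = (-1:ℚ[X])^r * (P * X^r) := by
    have hper : ∀ i ∈ (Finset.univ : Finset (Fin r)),
        (1:ℚ[X]) - (X+1)^(e i) = (-1) * (gq (e i) * X) := by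
      intro i _
      have hg := geom_sum_mul ((X:ℚ[X])+1) (e i)
      rw [gq]
      linear_combination hg
    rw [hA, Finset.prod_congr rfl hper, Finset.prod_mul_distrib, Finset.prod_const,
      Finset.prod_mul_distrib, Finset.prod_const, Finset.card_univ, Fintype.card_fin, hP]
  have key3 : ∀ k, A.coeff k = (-1:ℚ)^r * (if r ≤ k then P.coeff (k - r) else 0) := by
    intro k
    rw [key2, show ((-1:ℚ[X])^r) = C ((-1:ℚ)^r) by simp, Polynomial.coeff_C_mul,
      Polynomial.coeff_mul_X_pow']
  -- Step 3 : reduce to alternating sum of coefficients of P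
  have key4 : ∑ k ∈ range (m+1), (-1:ℚ)^k * A.coeff k
      = ∑ j ∈ range (n+1), (-1:ℚ)^j * P.coeff j := by
    rw [show m + 1 = r + (n+1) by omega, Finset.sum_range_add]
    have h0 : ∑ k ∈ range r, (-1:ℚ)^k * A.coeff k = 0 := by
      apply Finset.sum_eq_zero
      intro k hk
      rw [Finset.mem_range] at hk
      rw [key3, if_neg (by omega)]
      ring
    rw [h0, zero_add]
    apply Finset.sum_congr rfl
    intro j _
    rw [key3, if_pos (by omega), Nat.add_sub_cancel_left, ← mul_assoc, ← pow_add]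
    congr 1
    exact neg_one_pow_mod _ _ (by omega)
  -- Step 4 : facts about P
  have hPmono : P.Monic :=
    monic_prod_of_monic _ _ (fun i _ => (gq_spec (e i)).2.2 (by have := he2 i; omega))
  have hPdeg : P.natDegree = n + 1 := by
    rw [hP, Polynomial.natDegree_prod_of_monic _ _
      (fun i _ => (gq_spec (e i)).2.2 (by have := he2 i; omega))]
    have h1 : ∑ i, (gq (e i)).natDegree = ∑ i, (e i - 1) :=
      Finset.sum_congr rfl fun i _ => (gq_spec (e i)).2.1
    have h2 : ∑ i, (e i - 1) + r = ∑ i, e i := by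
      calc ∑ i, (e i - 1) + r = ∑ i : Fin r, ((e i - 1) + 1) := by
            rw [Finset.sum_add_distrib, Finset.sum_const, Finset.card_univ,
              Fintype.card_fin, smul_eq_mul, mul_one]
        _ = ∑ i, e i := Finset.sum_congr rfl fun i _ => by have := he2 i; omega
    omega
  have hPeval : P.eval (-1) = 1 := by
    rw [hP, Polynomial.eval_prod]
    apply Finset.prod_eq_one
    intro i _
    rw [gq, Polynomial.eval_finset_sum]
    have h3 : ∀ j ∈ range (e i), (((X:ℚ[X])+1)^j).eval (-1) = (0:ℚ)^j := by
      intro j _; simp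
    rw [Finset.sum_congr rfl h3, show e i = (e i - 1) + 1 by have := he2 i; omega,
      Finset.sum_range_succ']
    simp
  -- Step 5 : conclude
  have heval : P.eval (-1) = ∑ i ∈ range (n+2), P.coeff i * (-1:ℚ)^i :=
    Polynomial.eval_eq_sum_range' (by omega) (-1)
  rw [Finset.sum_range_succ] at heval
  have hlead : P.coeff (n+1) = 1 := by
    have := hPmono.leadingCoeff
    rwa [Polynomial.leadingCoeff, hPdeg] at this
  rw [hPeval, hlead, one_mul] at heval
  have hfin : ∑ j ∈ range (n+1), (-1:ℚ)^j * P.coeff j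
      = ∑ i ∈ range (n+1), P.coeff i * (-1:ℚ)^i :=
    Finset.sum_congr rfl fun i _ => by ring
  rw [key1, key4, hfin]
  have hpow : (-1:ℚ)^(n+1) = -(-1:ℚ)^n := by rw [pow_succ]; ring
  rw [hpow] at heval
  linarith
end

section
/- Let Td(n; d_1,…,d_r) := Σ_{j=0}^{r} (-1)^{n+r+j} Σ_{1 ≤ k_1 < ⋯ < k_j ≤ r} C(-1 + d_{k_1} + ⋯ + d_{k_j}, n+r) and let d' = (d_1,…,d_{r-1}). Then Td(n; d_1,…,d_r) = Σ_{l=0}^{n} (-1)^{n-l} C(d_r, n-l+1) · Td(l; d'). -/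
open Finset

open Polynomial
lemma descPoch_smeval (a : ℚ) (k : ℕ) :
    ((descPochhammer ℤ k).smeval a) = ∏ i ∈ Finset.range k, (a - i) := by
  induction k with
  | zero => simp [descPochhammer_zero, Polynomial.smeval_one]
  | succ n ih =>
    rw [descPochhammer_succ_right, Polynomial.smeval_mul, ih, Finset.prod_range_succ,
      Polynomial.smeval_sub, Polynomial.smeval_X, Polynomial.smeval_natCast]
    simp

lemma gbc_eq_choose (a : ℚ) (k : ℕ) : gbc a k = Ring.choose a k := by
  have h := Ring.descPochhammer_eq_factorial_smul_choose a k
  rw [descPoch_smeval, nsmul_eq_mul] at h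
  rw [gbc, h]
  field_simp

lemma gbc_add (a b : ℚ) (k : ℕ) :
    gbc (b + a) k = ∑ j ∈ Finset.range (k + 1), gbc b j * gbc a (k - j) := by
  rw [gbc_eq_choose, Ring.add_choose_eq k (Commute.all b a),
    Finset.Nat.sum_antidiagonal_eq_sum_range_succ_mk]
  simp [gbc_eq_choose]

lemma diff_vanish {ι : Type*} [DecidableEq ι] (s : Finset ι) (d : ι → ℚ) :
    ∀ p : Polynomial ℚ, p.degree < (s.card : WithBot ℕ) → ∀ x : ℚ,
      ∑ T ∈ s.powerset, (-1 : ℚ) ^ T.card * p.eval (x + ∑ i ∈ T, d i) = 0 := by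
  induction s using Finset.induction_on with
  | empty =>
    intro p hp x
    have hp0 : p = 0 := by
      rw [Finset.card_empty] at hp
      have h0 : p.degree < 0 := by simpa using hp
      exact Polynomial.degree_eq_bot.mp (Nat.WithBot.lt_zero_iff.mp h0)
    simp [hp0]
  | @insert a s ha ih =>
    intro p hp x
    set q : Polynomial ℚ := p - p.comp (X + C (d a)) with hq
    have hqeval : ∀ y : ℚ, q.eval y = p.eval y - p.eval (y + d a) := by
      intro y
      simp [hq, Polynomial.eval_comp]
    rw [Finset.sum_powerset_insert ha]
    have hcomb : (∑ T ∈ s.powerset, (-1:ℚ)^T.card * p.eval (x + ∑ i ∈ T, d i))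
         + ∑ T ∈ s.powerset, (-1:ℚ)^(insert a T).card * p.eval (x + ∑ i ∈ insert a T, d i)
         = ∑ T ∈ s.powerset, (-1:ℚ)^T.card * q.eval (x + ∑ i ∈ T, d i) := by
      rw [← Finset.sum_add_distrib]
      apply Finset.sum_congr rfl
      intro T hT
      have haT : a ∉ T := fun h => ha (Finset.mem_powerset.mp hT h)
      rw [Finset.card_insert_of_notMem haT, Finset.sum_insert haT, hqeval,
        show x + (d a + ∑ i ∈ T, d i) = (x + ∑ i ∈ T, d i) + d a by ring, pow_succ]
      ring
    rw [hcomb]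
    apply ih q _ x
    rcases eq_or_ne p 0 with h0 | h0
    · have : q = 0 := by simp [hq, h0]
      rw [this, Polynomial.degree_zero]
      exact WithBot.bot_lt_coe _
    · have h2 : p.leadingCoeff = (p.comp (X + C (d a))).leadingCoeff := by
        rw [Polynomial.leadingCoeff_comp (by simp)]
        simp [Polynomial.leadingCoeff_X_add_C]
      have hcomp0 : p.comp (X + C (d a)) ≠ 0 := by
        intro h
        apply h0
        rw [← Polynomial.leadingCoeff_eq_zero, h2, h, Polynomial.leadingCoeff_zero]
      have h1 : p.degree = (p.comp (X + C (d a))).degree := by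
        rw [Polynomial.degree_eq_natDegree h0, Polynomial.degree_eq_natDegree hcomp0,
          Polynomial.natDegree_comp]
        simp
      have hlt := Polynomial.degree_sub_lt h1 h0 h2
      have hle : p.degree ≤ (s.card : WithBot ℕ) := by
        rw [Finset.card_insert_of_notMem ha] at hp
        rw [Polynomial.degree_eq_natDegree h0] at hp ⊢
        have : p.natDegree < s.card + 1 := by exact_mod_cast hp
        exact_mod_cast Nat.lt_succ_iff.mp this
      exact lt_of_lt_of_le hlt hle

noncomputable def polm (m : ℕ) : Polynomial ℚ :=
  Polynomial.C ((Nat.factorial m : ℚ)⁻¹) * ∏ i ∈ Finset.range m, (X - C (1 + (i : ℚ)))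

lemma polm_eval (m : ℕ) (y : ℚ) : (polm m).eval y = gbc (-1 + y) m := by
  rw [polm, gbc, Polynomial.eval_mul, Polynomial.eval_C, Polynomial.eval_prod, div_eq_inv_mul]
  congr 1
  apply Finset.prod_congr rfl
  intro i _
  rw [Polynomial.eval_sub, Polynomial.eval_X, Polynomial.eval_C]
  ring

lemma polm_degree (m : ℕ) : (polm m).degree ≤ (m : WithBot ℕ) := by
  have h1 : (polm m).natDegree ≤ m := by
    refine le_trans (Polynomial.natDegree_mul_le) ?_
    rw [Polynomial.natDegree_C, zero_add]
    refine le_trans (Polynomial.natDegree_prod_le _ _) ?_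
    refine le_trans (Finset.sum_le_sum (g := fun _ => 1)
      (fun i _ => le_of_eq (Polynomial.natDegree_X_sub_C _))) ?_
    simp
  exact le_trans (Polynomial.degree_le_natDegree) (by exact_mod_cast h1)

lemma last_not_mem_map {r : ℕ} : Fin.last r ∉ (Finset.univ : Finset (Fin r)).map Fin.castSuccEmb := by
  intro h
  obtain ⟨j, -, hj⟩ := Finset.mem_map.mp h
  have hv := congrArg Fin.val hj
  simp at hv
  exact absurd hv (Nat.ne_of_lt j.isLt)

lemma univ_split {r : ℕ} :
    (Finset.univ : Finset (Fin (r+1))) = insert (Fin.last r) (Finset.univ.map Fin.castSuccEmb) := by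
  ext x
  simp only [Finset.mem_univ, Finset.mem_insert, Finset.mem_map, true_iff]
  rcases Fin.eq_castSucc_or_eq_last x with ⟨j, rfl⟩ | rfl
  · exact Or.inr ⟨j, trivial, rfl⟩
  · exact Or.inl rfl

lemma sum_powerset_map {r : ℕ} (f : Finset (Fin (r+1)) → ℚ) :
    ∑ T ∈ ((Finset.univ : Finset (Fin r)).map Fin.castSuccEmb).powerset, f T
      = ∑ T ∈ (Finset.univ : Finset (Fin r)).powerset, f (T.map Fin.castSuccEmb) := by
  refine (Finset.sum_bij (fun T _ => T.map Fin.castSuccEmb) ?_ ?_ ?_ ?_).symm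
  · intro T hT
    rw [Finset.mem_powerset] at hT ⊢
    exact Finset.map_subset_map.mpr hT
  · intro T1 h1 T2 h2 h
    exact Finset.map_injective _ h
  · intro T' hT'
    rw [Finset.mem_powerset] at hT'
    obtain ⟨u, hu, rfl⟩ := Finset.subset_map_iff.mp hT'
    exact ⟨u, Finset.mem_powerset.mpr hu, rfl⟩
  · intro T _
    rfl

lemma gbc_zero (b : ℚ) : gbc b 0 = 1 := by simp [gbc]

lemma vanish (r m : ℕ) (hm : m < r) (e : Fin r → ℚ) :
    ∑ T ∈ (Finset.univ : Finset (Fin r)).powerset,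
      (-1:ℚ)^T.card * gbc (-1 + ∑ i ∈ T, e i) m = 0 := by
  have h := diff_vanish Finset.univ e (polm m) ?_ 0
  · rw [← h]
    apply Finset.sum_congr rfl
    intro T _
    rw [polm_eval, zero_add]
  · refine lt_of_le_of_lt (polm_degree m) ?_
    rw [Finset.card_univ, Fintype.card_fin]
    exact_mod_cast hm

lemma key_s9 (a b : ℚ) (n r : ℕ) :
    gbc (a + b) (n+r+1) = gbc a (n+r+1)
      + (∑ l ∈ Finset.range (n+1), gbc b (n-l+1) * gbc a (l+r))
      + ∑ k ∈ Finset.Ico (n+2) (n+r+2), gbc b k * gbc a (n+r+1-k) := by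
  rw [show a + b = b + a by ring, gbc_add]
  rw [Finset.range_eq_Ico,
    ← Finset.sum_Ico_consecutive (fun k => gbc b k * gbc a (n+r+1-k))
      (Nat.zero_le (n+2)) (by omega)]
  congr 1
  rw [← Finset.range_eq_Ico, Finset.sum_range_succ' (fun k => gbc b k * gbc a (n+r+1-k)) (n+1)]
  rw [gbc_zero, one_mul, Nat.sub_zero, add_comm]
  congr 1
  rw [← Finset.sum_range_reflect (fun l => gbc b (l+1) * gbc a (n+r+1-(l+1))) (n+1)]
  apply Finset.sum_congr rfl
  intro l hl
  rw [Finset.mem_range] at hl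
  rw [show n+1-1-l+1 = n-l+1 by omega, show n+r+1-(n-l+1) = l+r by omega]

lemma Td_split (n r : ℕ) (d : Fin (r+1) → ℤ) :
    Td n (r+1) d = ∑ T ∈ (Finset.univ : Finset (Fin r)).powerset,
      (-1:ℚ)^(n+r+1+T.card) *
        (gbc (-1 + ∑ i ∈ T, (d i.castSucc : ℚ)) (n+r+1)
         - gbc ((-1 + ∑ i ∈ T, (d i.castSucc : ℚ)) + (d (Fin.last r) : ℚ)) (n+r+1)) := by
  rw [Td, univ_split, Finset.sum_powerset_insert last_not_mem_map, sum_powerset_map,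
    sum_powerset_map, ← Finset.sum_add_distrib]
  apply Finset.sum_congr rfl
  intro T _
  have hlm : Fin.last r ∉ T.map Fin.castSuccEmb :=
    fun h => last_not_mem_map (Finset.map_subset_map.mpr (Finset.subset_univ T) h)
  rw [Finset.card_map, Finset.card_insert_of_notMem hlm, Finset.card_map,
    Finset.sum_insert hlm, Finset.sum_map]
  simp only [Fin.coe_castSuccEmb]
  rw [show (-1:ℚ) + ((d (Fin.last r) : ℚ) + ∑ i ∈ T, (d i.castSucc : ℚ))
      = (-1 + ∑ i ∈ T, (d i.castSucc : ℚ)) + (d (Fin.last r) : ℚ) by ring]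
  rw [show n + (r+1) + (T.card + 1) = (n + r + 1 + T.card) + 1 by omega,
    show n + (r+1) + T.card = n + r + 1 + T.card by omega, pow_succ]
  ring_nf

theorem todd_recursion (n r : ℕ) (d : Fin (r + 1) → ℤ) (hd : ∀ i, 0 < d i) :
    Td n (r + 1) d =
      ∑ l ∈ Finset.range (n + 1),
        (-1) ^ (n - l) * gbc ((d (Fin.last r) : ℚ)) (n - l + 1) *
          Td l r (fun i => d i.castSucc) := by
  classical
  have hrhs : ∑ l ∈ Finset.range (n + 1),
        (-1:ℚ) ^ (n - l) * gbc ((d (Fin.last r) : ℚ)) (n - l + 1) *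
          Td l r (fun i => d i.castSucc)
      = ∑ T ∈ (Finset.univ : Finset (Fin r)).powerset,
          (-1:ℚ)^(n+r+T.card) *
            ∑ l ∈ Finset.range (n+1), gbc ((d (Fin.last r) : ℚ)) (n-l+1)
              * gbc (-1 + ∑ i ∈ T, (d i.castSucc : ℚ)) (l+r) := by
    simp only [Td, Finset.mul_sum]
    rw [Finset.sum_comm]
    apply Finset.sum_congr rfl
    intro T _
    apply Finset.sum_congr rfl
    intro l hl
    rw [Finset.mem_range] at hl
    have hsign : (-1:ℚ)^(n-l) * (-1:ℚ)^(l+r+T.card) = (-1:ℚ)^(n+r+T.card) := by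
      rw [← pow_add, show n-l+(l+r+T.card) = n+r+T.card by omega]
    rw [← hsign]
    ring
  rw [Td_split, hrhs, ← sub_eq_zero, ← Finset.sum_sub_distrib]
  have step : ∀ T ∈ (Finset.univ : Finset (Fin r)).powerset,
      (-1:ℚ)^(n+r+1+T.card) *
        (gbc (-1 + ∑ i ∈ T, (d i.castSucc : ℚ)) (n+r+1)
         - gbc ((-1 + ∑ i ∈ T, (d i.castSucc : ℚ)) + (d (Fin.last r) : ℚ)) (n+r+1))
      - (-1:ℚ)^(n+r+T.card) *
          ∑ l ∈ Finset.range (n+1), gbc ((d (Fin.last r) : ℚ)) (n-l+1)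
            * gbc (-1 + ∑ i ∈ T, (d i.castSucc : ℚ)) (l+r)
      = (-1:ℚ)^(n+r+T.card) *
          ∑ k ∈ Finset.Ico (n+2) (n+r+2), gbc ((d (Fin.last r) : ℚ)) k
            * gbc (-1 + ∑ i ∈ T, (d i.castSucc : ℚ)) (n+r+1-k) := by
    intro T _
    rw [key_s9 (-1 + ∑ i ∈ T, (d i.castSucc : ℚ)) ((d (Fin.last r) : ℚ)) n r,
      show n+r+1+T.card = (n+r+T.card)+1 by omega, pow_succ]
    ring
  rw [Finset.sum_congr rfl step]
  simp only [Finset.mul_sum]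
  rw [Finset.sum_comm]
  apply Finset.sum_eq_zero
  intro k hk
  rw [Finset.mem_Ico] at hk
  have hv := vanish r (n+r+1-k) (by omega) (fun i => (d i.castSucc : ℚ))
  calc ∑ T ∈ (Finset.univ : Finset (Fin r)).powerset,
        (-1:ℚ)^(n+r+T.card) * (gbc ((d (Fin.last r) : ℚ)) k
          * gbc (-1 + ∑ i ∈ T, (d i.castSucc : ℚ)) (n+r+1-k))
      = ((-1:ℚ)^(n+r) * gbc ((d (Fin.last r) : ℚ)) k) *
          ∑ T ∈ (Finset.univ : Finset (Fin r)).powerset,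
            (-1:ℚ)^T.card * gbc (-1 + ∑ i ∈ T, (d i.castSucc : ℚ)) (n+r+1-k) := by
        rw [Finset.mul_sum]
        apply Finset.sum_congr rfl
        intro T _
        rw [pow_add]
        ring
    _ = 0 := by rw [hv, mul_zero]
end

section
/- Define χ(n; d_1,…,d_r; t) := Σ_{j=0}^{r} (-1)^{n+r+j} Σ_{1 ≤ k_1 < ⋯ < k_j ≤ r} C(t·c_1 - 1 + d_{k_1} + ⋯ + d_{k_j}, n+r), where c_1 = n + r + 1 - Σ d_i and t ∈ ℚ. Then χ(n; d; 1 - t) = (-1)^n · χ(n; d; t). -/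
open Finset

/-- Euler–Poincaré characteristic `χ(X_n(d), K^t)` of the complete intersection,
via the combinatorial formula, where `c₁ = n + r + 1 - ∑ dᵢ`. -/
def chiCI (n r : ℕ) (d : Fin r → ℤ) (t : ℚ) : ℚ :=
  ∑ S ∈ (Finset.univ : Finset (Fin r)).powerset,
    (-1) ^ (n + r + S.card) *
      gbc (t * ((n : ℚ) + r + 1 - ∑ i, (d i : ℚ)) - 1 + ∑ i ∈ S, (d i : ℚ)) (n + r)

lemma gbc_reflect (a : ℚ) (k : ℕ) : gbc ((k : ℚ) - 1 - a) k = (-1) ^ k * gbc a k := by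
  have h1 : ∏ i ∈ Finset.range k, ((k : ℚ) - 1 - a - i)
      = ∏ i ∈ Finset.range k, (((k - 1 - i : ℕ) : ℚ) - a) := by
    refine Finset.prod_congr rfl fun i hi => ?_
    have hik : i < k := Finset.mem_range.mp hi
    have hc : ((k - 1 - i : ℕ) : ℚ) = (k : ℚ) - 1 - i := by
      have : k - 1 - i = k - (1 + i) := by omega
      rw [this, Nat.cast_sub (by omega)]
      push_cast; ring
    rw [hc]; ring
  have h2 := Finset.prod_range_reflect (fun j => ((j : ℚ) - a)) k
  have h3 : ∏ i ∈ Finset.range k, ((i : ℚ) - a)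
      = (-1) ^ k * ∏ i ∈ Finset.range k, (a - i) := by
    rw [show ((-1 : ℚ)) ^ k * ∏ i ∈ Finset.range k, (a - (i : ℚ))
        = ∏ i ∈ Finset.range k, (-1) * (a - (i : ℚ)) by
      rw [Finset.prod_mul_distrib, Finset.prod_const, Finset.card_range]]
    exact Finset.prod_congr rfl fun i _ => by ring
  unfold gbc
  rw [h1, h2, h3, mul_div_assoc]

theorem chi_one_sub (n r : ℕ) (hr : 1 ≤ r) (d : Fin r → ℤ) (hd : ∀ i, 0 < d i) (t : ℚ) :
    chiCI n r d (1 - t) = (-1) ^ n * chiCI n r d t := by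
  unfold chiCI
  rw [Finset.mul_sum]
  refine Finset.sum_nbij' (fun S => Sᶜ) (fun S => Sᶜ) ?_ ?_ ?_ ?_ ?_
  · intro S _; simp
  · intro S _; simp
  · intro S _; simp
  · intro S _; simp
  · intro S _
    have hcard : (Sᶜ : Finset (Fin r)).card = r - S.card := by
      simp [Finset.card_compl]
    have hle : S.card ≤ r := by
      simpa using Finset.card_le_univ S
    have hsum : (∑ i ∈ Sᶜ, (d i : ℚ)) = (∑ i, (d i : ℚ)) - ∑ i ∈ S, (d i : ℚ) := by
      have := Finset.sum_compl_add_sum S (fun i => (d i : ℚ))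
      linarith
    have harg : (1 - t) * ((n : ℚ) + r + 1 - ∑ i, (d i : ℚ)) - 1 + ∑ i ∈ S, (d i : ℚ)
        = ((n + r : ℕ) : ℚ) - 1 -
          (t * ((n : ℚ) + r + 1 - ∑ i, (d i : ℚ)) - 1 + ∑ i ∈ Sᶜ, (d i : ℚ)) := by
      rw [hsum]; push_cast; ring
    rw [harg, gbc_reflect, hcard]
    rw [show ((-1 : ℚ)) ^ (n + r + S.card) * ((-1) ^ (n + r) * gbc _ _)
        = ((-1 : ℚ)) ^ (n + r + S.card + (n + r)) * gbc _ _ by rw [pow_add]; ring]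
    rw [show ((-1 : ℚ)) ^ n * ((-1) ^ (n + r + (r - S.card)) * gbc _ _)
        = ((-1 : ℚ)) ^ (n + (n + r + (r - S.card))) * gbc _ _ by rw [pow_add]; ring]
    congr 1
    rw [neg_one_pow_eq_pow_mod_two, neg_one_pow_eq_pow_mod_two (n := n + (n + r + (r - S.card)))]
    congr 1
    omega
end

section
/- Define χ(n; d_1,…,d_r; t) := Σ_{j=0}^{r} (-1)^{n+r+j} Σ_{1 ≤ k_1 < ⋯ < k_j ≤ r} C(t·c_1 - 1 + d_{k_1} + ⋯ + d_{k_j}, n+r), where c_1 = n + r + 1 - Σ d_i. If c_1 > 0, t = k/N with 0 < k < N, and t·c_1 is an integer, then χ(n; d; t) = 0. -/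
open Finset

lemma gbc_int_zero (z : ℤ) (K : ℕ) (h0 : 0 ≤ z) (h1 : z < K) : gbc (z : ℚ) K = 0 := by
  unfold gbc
  rw [Finset.prod_eq_zero (i := z.toNat)]
  · simp
  · simp only [Finset.mem_range]; omega
  · have : ((z.toNat : ℕ) : ℚ) = (z : ℚ) := by
      exact_mod_cast congrArg (Int.cast : ℤ → ℚ) (Int.toNat_of_nonneg h0)
    rw [this]; ring

theorem chi_pos_c1 (n r N k : ℕ) (hr : 1 ≤ r) (d : Fin r → ℤ) (hd : ∀ i, 1 < d i)
    (hc : 0 < (n : ℤ) + r + 1 - ∑ i, d i) (hk : 0 < k) (hkN : k < N)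
    (hint : ∃ m : ℤ, (k : ℚ) / N * ((n : ℚ) + r + 1 - ∑ i, (d i : ℚ)) = m) :
    chiCI n r d ((k : ℚ) / N) = 0 := by
  obtain ⟨m, hm⟩ := hint
  unfold chiCI
  apply Finset.sum_eq_zero
  intro S _
  have hNpos : 0 < N := hk.trans hkN
  have hNQ : ((N : ℚ)) ≠ 0 := by positivity
  set c : ℤ := (n : ℤ) + r + 1 - ∑ i, d i with hcdef
  have hcQ : ((n : ℚ) + r + 1 - ∑ i, (d i : ℚ)) = (c : ℚ) := by
    rw [hcdef]; push_cast; ring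
  have hmN : (k : ℤ) * c = m * N := by
    have h := hm
    rw [hcQ] at h
    field_simp at h
    rw [mul_comm m]
    exact_mod_cast h
  have hm1 : 1 ≤ m := by nlinarith [hc, hk, hkN]
  have hm2 : m < c := by nlinarith [hc, hk, hkN]
  have hS0 : 0 ≤ ∑ i ∈ S, d i :=
    Finset.sum_nonneg fun i _ => le_of_lt (lt_trans one_pos (hd i))
  have hSle : ∑ i ∈ S, d i ≤ ∑ i, d i :=
    Finset.sum_le_sum_of_subset_of_nonneg (Finset.subset_univ S)
      (fun i _ _ => le_of_lt (lt_trans one_pos (hd i)))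
  have key : (k : ℚ) / N * ((n : ℚ) + r + 1 - ∑ i, (d i : ℚ)) - 1 + ∑ i ∈ S, (d i : ℚ)
      = ((m - 1 + ∑ i ∈ S, d i : ℤ) : ℚ) := by
    rw [hm]; push_cast; ring
  rw [key, gbc_int_zero]
  · ring
  · omega
  · have : m - 1 + ∑ i ∈ S, d i ≤ c - 2 + ∑ i, d i := by omega
    have h2 : c - 2 + ∑ i, d i = (n : ℤ) + r - 1 := by rw [hcdef]; ring
    push_cast
    omega
end

section
/- Let f(x) = e^{tx}(1 - e^{-x}) as a formal power series in x over ℚ (with t a rational parameter). Then for formal variables u_1, u_2, u_3, w: f(u_1)f(u_2)f(u_3) - f(u_1+w)f(u_2-w)f(u_3) = f(u_1)f(w)f(u_2-w+u_3) - f(w)f(u_2-w)f(u_1+u_3). -/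
set_option maxHeartbeats 1000000 in
theorem f_identity (t u1 u2 u3 w : ℝ) :
    let f : ℝ → ℝ := fun x => Real.exp (t * x) * (1 - Real.exp (-x))
    f u1 * f u2 * f u3 - f (u1 + w) * f (u2 - w) * f u3 =
      f u1 * f w * f (u2 - w + u3) - f w * f (u2 - w) * f (u1 + u3) := by
  intro f
  simp only [f]
  simp only [mul_add, mul_sub, neg_add, neg_sub]
  simp only [Real.exp_add, Real.exp_sub, Real.exp_neg]
  have h1 := Real.exp_ne_zero u1
  have h2 := Real.exp_ne_zero u2
  have h3 := Real.exp_ne_zero u3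
  have hw := Real.exp_ne_zero w
  field_simp
  ring
end

section
/- Define A_k(n; d_1,…,d_r) := k^n · Σ_{j=0}^{r} (-1)^{r-j} Σ_{1 ≤ k_1 < ⋯ < k_j ≤ r} C(c_1/k - 1 + d_{k_1} + ⋯ + d_{k_j}, n+r), where c_1 = n + r + 1 - Σ d_i, k ≥ 2, and k divides c_1. Then A_k(n; d_1,…,d_r) = k^n · Σ_{l=0}^{n} C(c_1/k, n-l) · (-1)^l · Td(l; d_1,…,d_r), where Td(l; d) = Σ_{j=0}^{r} (-1)^{l+r+j} Σ_{1 ≤ k_1 < ⋯ < k_j ≤ r} C(-1 + d_{k_1}+⋯+d_{k_j}, l+r). -/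
open Finset

/-- The `A_k`-genus of the complete intersection `X_n(d₁,…,d_r)` via the combinatorial
formula, where `c₁ = n + r + 1 - ∑ dᵢ`. -/
def Ak (n r k : ℕ) (d : Fin r → ℤ) : ℚ :=
  (k : ℚ) ^ n * ∑ S ∈ (Finset.univ : Finset (Fin r)).powerset,
    (-1) ^ (r - S.card) *
      gbc (((n : ℚ) + r + 1 - ∑ i, (d i : ℚ)) / k - 1 + ∑ i ∈ S, (d i : ℚ)) (n + r)

section AuxLemmas
open Polynomial

lemma gbc_prod_eq (a : ℚ) (k : ℕ) :
    ∏ i ∈ Finset.range k, (a - i) = (descPochhammer ℚ k).eval a := by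
  induction k with
  | zero => simp
  | succ k ih => rw [Finset.prod_range_succ, ih, descPochhammer_succ_eval]

lemma gbc_add_eq (x y : ℚ) (m : ℕ) :
    gbc (x + y) m = ∑ j ∈ Finset.range (m + 1), gbc x j * gbc y (m - j) := by
  simp only [gbc_eq_choose]
  rw [Ring.add_choose_eq m (Commute.all x y),
    Finset.Nat.sum_antidiagonal_eq_sum_range_succ_mk]

lemma alt_sum_poly {ι : Type*} [DecidableEq ι] (s : Finset ι) (e : ι → ℚ) :
    ∀ f : Polynomial ℚ, f.degree < s.card →
      ∑ S ∈ s.powerset, (-1 : ℚ) ^ S.card * f.eval (∑ i ∈ S, e i) = 0 := by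
  induction s using Finset.induction with
  | empty =>
    intro f hf
    have hf0 : f = 0 := by
      rw [Finset.card_empty] at hf
      exact degree_eq_bot.mp (by exact_mod_cast Nat.WithBot.lt_zero_iff.mp (by exact_mod_cast hf))
    simp [hf0]
  | @insert a s ha ih =>
    intro f hf
    set g : Polynomial ℚ := f - f.comp (X + C (e a)) with hgdef
    have hdeg : g.degree < s.card := by
      rcases eq_or_ne f 0 with h0 | h0
      · have : g = 0 := by simp [hgdef, h0]
        rw [this, degree_zero]
        exact bot_lt_iff_ne_bot.mpr (by exact_mod_cast WithBot.natCast_ne_bot s.card)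
      · have hlc : (f.comp (X + C (e a))).leadingCoeff = f.leadingCoeff := by
          rw [Polynomial.leadingCoeff_comp (by simp [Polynomial.natDegree_X_add_C])]
          simp [Polynomial.leadingCoeff_X_add_C]
        have hc0 : f.comp (X + C (e a)) ≠ 0 := by
          intro h
          apply h0
          rw [← Polynomial.leadingCoeff_eq_zero, ← hlc, h, leadingCoeff_zero]
        have h2 : f.degree = (f.comp (X + C (e a))).degree := by
          rw [Polynomial.degree_eq_natDegree h0, Polynomial.degree_eq_natDegree hc0,
            Polynomial.natDegree_comp, Polynomial.natDegree_X_add_C, mul_one]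
        have h3 : g.degree < f.degree := Polynomial.degree_sub_lt h2 h0 hlc.symm
        have h4 : f.degree < (s.card + 1 : ℕ) := by
          rwa [Finset.card_insert_of_notMem ha] at hf
        calc g.degree < f.degree := h3
          _ ≤ s.card := by
            rcases Polynomial.degree_eq_natDegree h0 ▸ h4 with h5
            rw [Polynomial.degree_eq_natDegree h0]
            exact_mod_cast Nat.lt_succ_iff.mp (by exact_mod_cast h5)
    have key := ih g hdeg
    rw [Finset.sum_powerset_insert ha, ← key, ← Finset.sum_add_distrib]
    apply Finset.sum_congr rfl
    intro S hS
    have haS : a ∉ S := fun h => ha (Finset.mem_powerset.mp hS h)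
    rw [Finset.card_insert_of_notMem haS, Finset.sum_insert haS, hgdef, eval_sub, eval_comp,
      eval_add, eval_X, eval_C, pow_succ, add_comm (e a) _]
    ring

lemma alt_sum_gbc (r t : ℕ) (d : Fin r → ℤ) (ht : t < r) :
    ∑ S ∈ (Finset.univ : Finset (Fin r)).powerset,
      (-1 : ℚ) ^ S.card * gbc (-1 + ∑ i ∈ S, (d i : ℚ)) t = 0 := by
  set f : Polynomial ℚ :=
    Polynomial.C ((t.factorial : ℚ))⁻¹ * ∏ i ∈ Finset.range t, (X - C (1 + (i : ℚ))) with hf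
  have heval : ∀ x : ℚ, f.eval x = gbc (-1 + x) t := by
    intro x
    rw [hf, eval_mul, eval_C, eval_prod, gbc, div_eq_inv_mul]
    congr 1
    apply Finset.prod_congr rfl
    intro i _
    rw [eval_sub, eval_X, eval_C]
    ring
  have hdeg : f.degree < (Finset.univ : Finset (Fin r)).card := by
    rw [Finset.card_univ, Fintype.card_fin]
    calc f.degree ≤ 0 + (∏ i ∈ Finset.range t, (X - C (1 + (i : ℚ)))).degree :=
          le_trans (Polynomial.degree_mul_le _ _) (add_le_add Polynomial.degree_C_le le_rfl)
      _ ≤ 0 + (t : WithBot ℕ) := by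
          apply add_le_add_right
          rw [Polynomial.degree_prod]
          refine le_of_eq ?_
          have h1 : ∑ i ∈ Finset.range t, (X - C (1 + (i : ℚ))).degree
              = ∑ _i ∈ Finset.range t, (1 : WithBot ℕ) :=
            Finset.sum_congr rfl fun i _ => degree_X_sub_C _
          rw [h1, Finset.sum_const, Finset.card_range]
          simp
      _ < (r : WithBot ℕ) := by rw [zero_add]; exact_mod_cast ht
  rw [← alt_sum_poly Finset.univ (fun i => (d i : ℚ)) f hdeg]
  exact Finset.sum_congr rfl fun S _ => by rw [heval]

end AuxLemmas

theorem Ak_eq_todd_sum (n r k : ℕ) (hr : 1 ≤ r) (hk : 2 ≤ k) (d : Fin r → ℤ)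
    (hd : ∀ i, 0 < d i) (hdvd : (k : ℤ) ∣ ((n : ℤ) + r + 1 - ∑ i, d i)) :
    Ak n r k d =
      (k : ℚ) ^ n * ∑ l ∈ Finset.range (n + 1),
        gbc (((n : ℚ) + r + 1 - ∑ i, (d i : ℚ)) / k) (n - l) * (-1) ^ l * Td l r d := by
  classical
  unfold Ak Td
  congr 1
  set c : ℚ := ((n : ℚ) + r + 1 - ∑ i, (d i : ℚ)) / k with hc
  have hL : ∑ S ∈ (Finset.univ : Finset (Fin r)).powerset,
      (-1:ℚ) ^ (r - S.card) * gbc (c - 1 + ∑ i ∈ S, (d i : ℚ)) (n + r)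
      = ∑ j ∈ Finset.range (n + r + 1), ∑ S ∈ (Finset.univ : Finset (Fin r)).powerset,
          (-1:ℚ) ^ (r + S.card) *
            (gbc c j * gbc (-1 + ∑ i ∈ S, (d i : ℚ)) (n + r - j)) := by
    rw [Finset.sum_comm]
    apply Finset.sum_congr rfl
    intro S hS
    have hcard : S.card ≤ r := by
      simpa using Finset.card_le_card (Finset.mem_powerset.mp hS)
    have hsign : ((-1:ℚ)) ^ (r - S.card) = (-1:ℚ) ^ (r + S.card) := by
      rw [neg_one_pow_eq_pow_mod_two, neg_one_pow_eq_pow_mod_two (n := r + S.card)]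
      congr 1
      omega
    rw [hsign, show c - 1 + ∑ i ∈ S, (d i : ℚ) = c + (-1 + ∑ i ∈ S, (d i : ℚ)) by ring,
      gbc_add_eq, Finset.mul_sum]
  have hTail : ∑ j ∈ Finset.Ico (n + 1) (n + r + 1),
      ∑ S ∈ (Finset.univ : Finset (Fin r)).powerset,
        (-1:ℚ) ^ (r + S.card) *
          (gbc c j * gbc (-1 + ∑ i ∈ S, (d i : ℚ)) (n + r - j)) = 0 := by
    apply Finset.sum_eq_zero
    intro j hj
    have hj' : n + r - j < r := by
      rcases Finset.mem_Ico.mp hj with ⟨h1, h2⟩; omega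
    have hstep : ∑ S ∈ (Finset.univ : Finset (Fin r)).powerset,
        (-1:ℚ) ^ (r + S.card) * (gbc c j * gbc (-1 + ∑ i ∈ S, (d i : ℚ)) (n + r - j))
        = ((-1:ℚ) ^ r * gbc c j) * ∑ S ∈ (Finset.univ : Finset (Fin r)).powerset,
            (-1:ℚ) ^ S.card * gbc (-1 + ∑ i ∈ S, (d i : ℚ)) (n + r - j) := by
      rw [Finset.mul_sum]
      apply Finset.sum_congr rfl
      intro S _
      rw [pow_add]
      ring
    rw [hstep, alt_sum_gbc r (n + r - j) d hj', mul_zero]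
  have hR : ∑ l ∈ Finset.range (n + 1), gbc c (n - l) * (-1:ℚ) ^ l *
        (∑ S ∈ (Finset.univ : Finset (Fin r)).powerset,
          (-1:ℚ) ^ (l + r + S.card) * gbc (-1 + ∑ i ∈ S, (d i : ℚ)) (l + r))
      = ∑ j ∈ Finset.range (n + 1), ∑ S ∈ (Finset.univ : Finset (Fin r)).powerset,
          (-1:ℚ) ^ (r + S.card) *
            (gbc c j * gbc (-1 + ∑ i ∈ S, (d i : ℚ)) (n + r - j)) := by
    rw [← Finset.sum_range_reflect (fun j => ∑ S ∈ (Finset.univ : Finset (Fin r)).powerset,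
      (-1:ℚ) ^ (r + S.card) *
        (gbc c j * gbc (-1 + ∑ i ∈ S, (d i : ℚ)) (n + r - j))) (n + 1)]
    apply Finset.sum_congr rfl
    intro l hl
    have hln : l ≤ n := Nat.lt_succ_iff.mp (Finset.mem_range.mp hl)
    have hidx : n + 1 - 1 - l = n - l := by omega
    simp only [hidx]
    rw [Finset.mul_sum]
    apply Finset.sum_congr rfl
    intro S _
    have h1 : n + r - (n - l) = l + r := by omega
    rw [h1]
    have h2 : (-1:ℚ) ^ l * (-1:ℚ) ^ (l + r + S.card) = (-1:ℚ) ^ (r + S.card) := by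
      rw [← pow_add, show l + (l + r + S.card) = 2 * l + (r + S.card) by ring, pow_add,
        pow_mul]
      norm_num
    linear_combination gbc c (n - l) * gbc (-1 + ∑ i ∈ S, (d i : ℚ)) (l + r) * h2
  rw [hL, ← Finset.sum_range_add_sum_Ico _ (show n + 1 ≤ n + r + 1 by omega), hTail, add_zero, hR]
end
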